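/- Let M be an A-module with the equal images property which also has the equal kernels property, i.e., for each j ∈ {1,…,p−1} there is a k-subspace V_j ⊆ M such that ker(u_M^j) = V_j for every point operator u. Then 𝔪M = 0 (equivalently, every point operator acts as zero on M, so M has constant Jordan type (dim_k M)[1]). -/

import Mathlib

open MvPolynomial Module

set_option maxHeartbeats 1000000
set_option synthInstance.maxHeartbeats 400000

noncomputable section

/-- The defining ideal `(X^p, Y^p)` of the polynomial ring in two variables. -/
def relI (k : Type) [Field k] (p : ℕ) : Ideal (MvPolynomial (Fin 2) k) :=
  Ideal.span {(X 0 : MvPolynomial (Fin 2) k) ^ p, (X 1 : MvPolynomial (Fin 2) k) ^ p}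

/-- The algebra `A = k[X,Y]/(X^p, Y^p)`. -/
abbrev Amod (k : Type) [Field k] (p : ℕ) : Type :=
  MvPolynomial (Fin 2) k ⧸ relI k p

variable (k : Type) [Field k] (p : ℕ)

/-- `x`, the image of `X` in `A`. -/
def xA : Amod k p := Ideal.Quotient.mk (relI k p) (X 0)

/-- `y`, the image of `Y` in `A`. -/
def yA : Amod k p := Ideal.Quotient.mk (relI k p) (X 1)

/-- The maximal ideal `𝔪 = (x, y)` of `A`. -/
def mA : Ideal (Amod k p) := Ideal.span {xA k p, yA k p}

/-- A point operator: `u = α x + β y` with `(α, β) ≠ (0, 0)`. -/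
def IsPointOp (u : Amod k p) : Prop :=
  ∃ α β : k, (α ≠ 0 ∨ β ≠ 0) ∧ u = α • xA k p + β • yA k p

/-- Equal images property: `u M = 𝔪 M` for every point operator `u`. -/
def EIP (M : Type) [AddCommGroup M] [Module (Amod k p) M] : Prop :=
  ∀ u : Amod k p, IsPointOp k p u →
    LinearMap.range (LinearMap.lsmul (Amod k p) M u)
      = mA k p • (⊤ : Submodule (Amod k p) M)

/-- `M` lies in `EIP_d`: equal images property and `𝔪^d M = 0`. -/
def EIPd (d : ℕ) (M : Type) [AddCommGroup M] [Module (Amod k p) M] : Prop :=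
  EIP k p M ∧ (mA k p) ^ d • (⊤ : Submodule (Amod k p) M) = ⊥


/-- an `A`-module with both the equal images property and the equal kernels
property satisfies `𝔪M = 0`. -/
theorem EIP_and_equalKernels_implies_trivial_action
    [IsAlgClosed k] [Fact p.Prime] [CharP k p]
    (M : Type) [AddCommGroup M] [Module (Amod k p) M]
    [Module k M] [IsScalarTower k (Amod k p) M] [FiniteDimensional k M]
    (hE : EIP k p M)
    (hK : ∀ j : ℕ, 1 ≤ j → j ≤ p - 1 → ∃ V : Submodule k M,
      ∀ u : Amod k p, IsPointOp k p u →
        (LinearMap.ker ((LinearMap.lsmul (Amod k p) M u) ^ j)).restrictScalars k = V) :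
    mA k p • (⊤ : Submodule (Amod k p) M) = ⊥ := by
  by_contra hN
  have hp2 : 2 ≤ p := (Fact.out : p.Prime).two_le
  have hx : IsPointOp k p (xA k p) := ⟨1, 0, Or.inl one_ne_zero, by simp⟩
  have hy : IsPointOp k p (yA k p) := ⟨0, 1, Or.inr one_ne_zero, by simp⟩
  obtain ⟨V, hV⟩ := hK 1 le_rfl (by omega)
  set F : M →ₗ[k] M := (LinearMap.lsmul (Amod k p) M (xA k p)).restrictScalars k with hF
  set G : M →ₗ[k] M := (LinearMap.lsmul (Amod k p) M (yA k p)).restrictScalars k with hG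
  have hkerV : ∀ u : Amod k p, IsPointOp k p u →
      LinearMap.ker ((LinearMap.lsmul (Amod k p) M u).restrictScalars k) = V := by
    intro u hu
    rw [LinearMap.ker_restrictScalars, ← hV u hu, pow_one]
  have hkerF : LinearMap.ker F = V := hkerV _ hx
  have hkerG : LinearMap.ker G = V := hkerV _ hy
  have hrangeF : LinearMap.range F =
      Submodule.restrictScalars k (mA k p • (⊤ : Submodule (Amod k p) M)) := by
    ext m
    simp only [LinearMap.mem_range, Submodule.restrictScalars_mem, ← hE _ hx]
    rfl
  have hrangeG : LinearMap.range G = LinearMap.range F := by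
    rw [hrangeF]
    ext m
    simp only [LinearMap.mem_range, Submodule.restrictScalars_mem, ← hE _ hy]
    rfl
  have hFne : LinearMap.range F ≠ ⊥ := by
    rw [hrangeF]
    intro h
    exact hN ((Submodule.restrictScalars_eq_bot_iff k (Amod k p) M).mp h)
  have hkertop : LinearMap.ker F < ⊤ := by
    rcases lt_or_eq_of_le (le_top : LinearMap.ker F ≤ ⊤) with h | h
    · exact h
    · exfalso; exact hFne (by rw [LinearMap.range_eq_bot]; exact LinearMap.ker_eq_top.mp h)
  haveI : Nontrivial (M ⧸ LinearMap.ker F) :=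
    Submodule.Quotient.nontrivial_iff.mpr hkertop.ne
  -- G, corestricted to range F
  have hGmem : ∀ m : M, G m ∈ LinearMap.range F := fun m =>
    hrangeG ▸ LinearMap.mem_range_self G m
  set G' : M →ₗ[k] LinearMap.range F := G.codRestrict (LinearMap.range F) hGmem with hG'
  have hle : LinearMap.ker F ≤ LinearMap.ker G' := by
    intro m hm
    have : G m = 0 := by rw [← LinearMap.mem_ker, hkerG, ← hkerF]; exact hm
    rw [LinearMap.mem_ker]
    apply Subtype.ext
    simpa [hG', LinearMap.codRestrict_apply] using this
  set Gq : (M ⧸ LinearMap.ker F) →ₗ[k] LinearMap.range F :=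
    Submodule.liftQ (LinearMap.ker F) G' hle with hGq
  set eF := F.quotKerEquivRange with heF
  set h : Module.End k (M ⧸ LinearMap.ker F) := eF.symm.toLinearMap ∘ₗ Gq with hh
  obtain ⟨c, hc⟩ := Module.End.exists_eigenvalue h
  obtain ⟨v, hv⟩ := hc.exists_hasEigenvector
  obtain ⟨m, rfl⟩ := Submodule.Quotient.mk_surjective _ v
  have hm : m ∉ LinearMap.ker F := fun hmem =>
    hv.2 ((Submodule.Quotient.mk_eq_zero _).mpr hmem)
  have heig : h (Submodule.Quotient.mk m) = c • Submodule.Quotient.mk m := hv.apply_eq_smul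
  have key : G m = c • F m := by
    have h1 : eF (h (Submodule.Quotient.mk m)) = eF (c • Submodule.Quotient.mk m) := by
      rw [heig]
    have h2 : eF (h (Submodule.Quotient.mk m)) = G' m := by
      rw [hh]
      simp [hGq, Submodule.liftQ_apply]
    have h3 : (eF (c • (Submodule.Quotient.mk m : M ⧸ LinearMap.ker F)) : M) = c • F m := by
      rw [map_smul]
      have : (eF (Submodule.Quotient.mk m) : M) = F m :=
        LinearMap.quotKerEquivRange_apply_mk F m
      rw [Submodule.coe_smul, this]
    have h4 : (G' m : M) = G m := rfl
    calc G m = (G' m : M) := rfl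
      _ = (eF (h (Submodule.Quotient.mk m)) : M) := by rw [h2]
      _ = c • F m := by rw [h1, h3]
  -- the point operator y - c x kills m
  set u : Amod k p := (-c) • xA k p + (1 : k) • yA k p with hu
  have hupo : IsPointOp k p u := ⟨-c, 1, Or.inr one_ne_zero, rfl⟩
  have humem : m ∈ LinearMap.ker ((LinearMap.lsmul (Amod k p) M u).restrictScalars k) := by
    simp only [LinearMap.mem_ker, LinearMap.restrictScalars_apply, LinearMap.lsmul_apply, hu]
    have : ((-c) • xA k p + (1 : k) • yA k p) • m
        = (-c) • (xA k p • m) + (yA k p • m) := by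
      rw [add_smul, smul_assoc, smul_assoc, one_smul]
    rw [this]
    have hFm : xA k p • m = F m := rfl
    have hGm : yA k p • m = G m := rfl
    rw [hFm, hGm, key, neg_smul, neg_add_cancel]
  rw [hkerV u hupo, ← hkerF] at humem
  exact hm humem


end
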